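/- For any abelian group A there is a short exact sequence 0 → Sym²(A) → P(A) → A → 0, where P(A) is the universal target of quadratic maps on A with universal quadratic map p : A → P(A), the map j : Sym²(A) → P(A) sends ab to p(a+b) - p(a) - p(b), and the map q : P(A) → A sends p(a) to a. -/

import Mathlib

open TensorProduct

def crossEff {A B : Type*} [AddCommGroup A] [AddCommGroup B] (f : A → B) (a b : A) : B :=
  f (a + b) - f a - f b

def IsQuadraticMap {A B : Type*} [AddCommGroup A] [AddCommGroup B] (f : A → B) : Prop :=
  (∀ a₁ a₂ b : A, crossEff f (a₁ + a₂) b = crossEff f a₁ b + crossEff f a₂ b) ∧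
  (∀ a b₁ b₂ : A, crossEff f a (b₁ + b₂) = crossEff f a b₁ + crossEff f a b₂)

/-- `p : A → P` is a universal quadratic map: it is quadratic and every quadratic map
out of `A` factors uniquely through it via a group homomorphism. -/
def IsUniversalQuadratic {A P : Type*} [AddCommGroup A] [AddCommGroup P]
    (p : A → P) : Prop :=
  IsQuadraticMap p ∧
    ∀ (B : Type*) [AddCommGroup B] (f : A → B), IsQuadraticMap f →
      ∃! h : P →+ B, ∀ a : A, f a = h (p a)

/-- The symmetrizing relations in `A ⊗ A`. -/
def symRel (A : Type*) [AddCommGroup A] : Submodule ℤ (A ⊗[ℤ] A) :=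
  Submodule.span ℤ {x | ∃ a b : A, a ⊗ₜ[ℤ] b - b ⊗ₜ[ℤ] a = x}

/-- The second symmetric power `Sym²(A)` of an abelian group. -/
def SymSq (A : Type*) [AddCommGroup A] := (A ⊗[ℤ] A) ⧸ symRel A

noncomputable instance (A : Type*) [AddCommGroup A] : AddCommGroup (SymSq A) :=
  inferInstanceAs (AddCommGroup ((A ⊗[ℤ] A) ⧸ symRel A))

section Transfer
universe uA uP uB uC
variable {A : Type uA} {P : Type uP} [AddCommGroup A] [AddCommGroup P]

lemma isQuadraticMap_zero (C : Type uC) [AddCommGroup C] :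
    IsQuadraticMap (fun _ : A => (0 : C)) := by
  constructor <;> intro x y z <;> simp [crossEff]

lemma isQuadraticMap_comp {C : Type*} {D : Type*} [AddCommGroup C] [AddCommGroup D]
    {f : A → C} (hf : IsQuadraticMap f) (g : C →+ D) : IsQuadraticMap (g ∘ f) := by
  have key : ∀ a b : A, crossEff (g ∘ f) a b = g (crossEff f a b) := by
    intro a b; simp [crossEff, map_sub]
  exact ⟨fun a a' b => by rw [key, key, key, hf.1, map_add],
         fun a b b' => by rw [key, key, key, hf.2, map_add]⟩

/-- ULift of the circle, in the test universe. -/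
noncomputable abbrev QZ : Type uB := ULift.{uB} (AddCircle (1 : ℚ))

noncomputable def upQZ : AddCircle (1 : ℚ) →+ QZ.{uB} :=
  AddEquiv.ulift.symm.toAddMonoidHom

lemma upQZ_injective : Function.Injective (upQZ.{uB}) :=
  AddEquiv.ulift.symm.injective

lemma closure_range_p (p : A → P)
    (huniv : ∀ (B : Type uB) [AddCommGroup B] (f : A → B), IsQuadraticMap f →
      ∃! h : P →+ B, ∀ a : A, f a = h (p a)) :
    AddSubgroup.closure (Set.range p) = ⊤ := by
  rw [AddSubgroup.eq_top_iff']
  intro x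
  by_contra hx
  set T := AddSubgroup.closure (Set.range p) with hT
  set π := QuotientAddGroup.mk' T with hπ
  have hπx : π x ≠ 0 := fun h => hx ((QuotientAddGroup.eq_zero_iff x).1 h)
  obtain ⟨c, hc⟩ := CharacterModule.exists_character_apply_ne_zero_of_ne_zero hπx
  let ψ : P →+ QZ.{uB} := (upQZ.comp (c : (P ⧸ T) →+ AddCircle (1 : ℚ))).comp π
  obtain ⟨h0, -, huniq⟩ := huniv QZ.{uB} (fun _ => 0) (isQuadraticMap_zero _)
  have e1 : (0 : P →+ QZ.{uB}) = h0 := huniq 0 (fun a => by simp)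
  have e2 : ψ = h0 := by
    refine huniq ψ (fun a => ?_)
    have hpa : π (p a) = 0 :=
      (QuotientAddGroup.eq_zero_iff _).2 (AddSubgroup.subset_closure ⟨a, rfl⟩)
    show (0 : QZ.{uB}) = upQZ (c (π (p a)))
    rw [hpa, map_zero, map_zero]
  have hx0 : ψ x = 0 := DFunLike.congr_fun (e2.trans e1.symm) x
  have : upQZ (c (π x)) = upQZ 0 := by rw [map_zero]; exact hx0
  exact hc (upQZ_injective this)

theorem univ_transfer (p : A → P) (_hpq : IsQuadraticMap p)
    (huniv : ∀ (B : Type uB) [AddCommGroup B] (f : A → B), IsQuadraticMap f →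
      ∃! h : P →+ B, ∀ a : A, f a = h (p a))
    (C : Type uC) [AddCommGroup C] (f : A → C) (hf : IsQuadraticMap f) :
    ∃! h : P →+ C, ∀ a : A, f a = h (p a) := by
  have hT := closure_range_p p huniv
  set R : AddSubgroup (P × C) := AddSubgroup.closure (Set.range fun a => (p a, f a)) with hR
  have graph2 : ∀ c : C, ((0 : P), c) ∈ R → c = 0 := by
    intro c hcR
    by_contra hc0
    obtain ⟨χ, hχ⟩ := CharacterModule.exists_character_apply_ne_zero_of_ne_zero hc0
    obtain ⟨h', hh', -⟩ :=
      huniv QZ.{uB} ((upQZ.comp (χ : C →+ AddCircle (1 : ℚ))) ∘ f)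
        (isQuadraticMap_comp hf _)
    let ψ : (P × C) →+ QZ.{uB} :=
      (upQZ.comp (χ : C →+ AddCircle (1 : ℚ))).comp (AddMonoidHom.snd P C)
        - h'.comp (AddMonoidHom.fst P C)
    have hRker : R ≤ ψ.ker := by
      rw [hR, AddSubgroup.closure_le]
      rintro y ⟨a, rfl⟩
      show ψ (p a, f a) = 0
      have : upQZ (χ (f a)) = h' (p a) := hh' a
      simp [ψ, AddMonoidHom.sub_apply, this]; exact sub_eq_zero.mpr this
    have h1 : ψ (0, c) = 0 := hRker hcR
    have h2 : ψ (0, c) = upQZ (χ c) := by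
      simp [ψ, AddMonoidHom.sub_apply]; rfl
    rw [h2] at h1
    exact hχ (upQZ_injective (by rw [h1, map_zero]))
  have graph1 : ∀ x : P, ∃ c : C, (x, c) ∈ R := by
    intro x
    have hmem : x ∈ R.map (AddMonoidHom.fst P C) := by
      have hle : AddSubgroup.closure (Set.range p) ≤ R.map (AddMonoidHom.fst P C) := by
        rw [AddSubgroup.closure_le]
        rintro y ⟨a, rfl⟩
        exact ⟨(p a, f a), AddSubgroup.subset_closure ⟨a, rfl⟩, rfl⟩
      rw [hT] at hle
      exact hle (AddSubgroup.mem_top x)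
    obtain ⟨y, hy, hyx⟩ := hmem
    refine ⟨y.2, ?_⟩
    have : (x, y.2) = y := by
      ext
      · exact hyx.symm
      · rfl
    rwa [this]
  choose g hg using graph1
  have hunique : ∀ (x : P) (c : C), (x, c) ∈ R → c = g x := by
    intro x c hc
    have hsub := sub_mem hc (hg x)
    have h0 : ((0 : P), c - g x) ∈ R := by
      simpa [Prod.mk_sub_mk] using hsub
    exact sub_eq_zero.mp (graph2 _ h0)
  have hgadd : ∀ x y, g (x + y) = g x + g y := fun x y =>
    (hunique (x + y) (g x + g y) (by simpa [Prod.mk_add_mk] using add_mem (hg x) (hg y))).symm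
  refine ⟨AddMonoidHom.mk' g hgadd, fun a => ?_, fun h₂ hh₂ => ?_⟩
  · exact hunique (p a) (f a) (AddSubgroup.subset_closure ⟨a, rfl⟩)
  · refine AddMonoidHom.eq_of_eqOn_dense hT ?_
    rintro y ⟨a, rfl⟩
    show h₂ (p a) = g (p a)
    rw [← hh₂ a]
    exact hunique (p a) (f a) (AddSubgroup.subset_closure ⟨a, rfl⟩)

end Transfer

section Aux
variable {A : Type*} [AddCommGroup A]

noncomputable def tmk (a b : A) : SymSq A := Submodule.Quotient.mk (a ⊗ₜ[ℤ] b)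

lemma tmk_add_left (a a' b : A) : tmk (a + a') b = tmk a b + tmk a' b := by
  show Submodule.Quotient.mk _ = _
  rw [TensorProduct.add_tmul, Submodule.Quotient.mk_add]; rfl

lemma tmk_add_right (a b b' : A) : tmk a (b + b') = tmk a b + tmk a b' := by
  show Submodule.Quotient.mk _ = _
  rw [TensorProduct.tmul_add, Submodule.Quotient.mk_add]; rfl

lemma tmk_zero_left (b : A) : tmk (0 : A) b = 0 := by
  show Submodule.Quotient.mk _ = _
  rw [TensorProduct.zero_tmul]; rfl

lemma tmk_zero_right (a : A) : tmk a (0 : A) = 0 := by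
  show Submodule.Quotient.mk _ = _
  rw [TensorProduct.tmul_zero]; rfl

lemma tmk_neg_left (a b : A) : tmk (-a) b = -tmk a b := by
  have h := tmk_add_left a (-a) b
  simp only [add_neg_cancel, tmk_zero_left] at h
  exact eq_neg_of_add_eq_zero_left (by rw [add_comm]; exact h.symm)

lemma tmk_neg_right (a b : A) : tmk a (-b) = -tmk a b := by
  have h := tmk_add_right a b (-b)
  simp only [add_neg_cancel, tmk_zero_right] at h
  exact eq_neg_of_add_eq_zero_left (by rw [add_comm]; exact h.symm)

lemma tmk_comm (a b : A) : tmk a b = tmk b a :=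
  (Submodule.Quotient.eq _).2 (Submodule.subset_span ⟨a, b, rfl⟩)

lemma SymSq.inductionOn {motive : SymSq A → Prop} (x : SymSq A)
    (zero : motive 0)
    (tmul : ∀ a b : A, motive (tmk a b))
    (add : ∀ x y, motive x → motive y → motive (x + y)) : motive x := by
  obtain ⟨y, rfl⟩ := Submodule.Quotient.mk_surjective _ x
  induction y using TensorProduct.induction_on with
  | zero => exact zero
  | tmul a b => exact tmul a b
  | add u v hu hv =>
    have : (Submodule.Quotient.mk (u + v) : SymSq A)
        = Submodule.Quotient.mk u + Submodule.Quotient.mk v := rfl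
    rw [this]; exact add _ _ hu hv

end Aux

section J
variable {A P : Type*} [AddCommGroup A] [AddCommGroup P]

lemma crossEff_comm (p : A → P) (a b : A) : crossEff p a b = crossEff p b a := by
  unfold crossEff; rw [add_comm a b]; abel

noncomputable def ceBil (p : A → P) (hp : IsQuadraticMap p) : A →ₗ[ℤ] A →ₗ[ℤ] P :=
  LinearMap.mk₂' ℤ ℤ (crossEff p)
    (fun a a' b => hp.1 a a' b)
    (fun c a b =>
      (AddMonoidHom.mk' (fun a => crossEff p a b) (fun a a' => hp.1 a a' b)).map_zsmul c a)
    (fun a b b' => hp.2 a b b')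
    (fun c a b =>
      (AddMonoidHom.mk' (fun b => crossEff p a b) (fun b b' => hp.2 a b b')).map_zsmul c b)

noncomputable def jHom (p : A → P) (hp : IsQuadraticMap p) : SymSq A →+ P :=
  ((symRel A).liftQ (TensorProduct.lift (ceBil p hp)) (by
    rw [symRel, Submodule.span_le]
    rintro x ⟨a, b, rfl⟩
    simp only [SetLike.mem_coe, LinearMap.mem_ker, map_sub]
    refine LinearMap.mem_ker.mpr ((map_sub (TensorProduct.lift (ceBil p hp)) _ _).trans ?_)
    show TensorProduct.lift (ceBil p hp) _ - TensorProduct.lift (ceBil p hp) _ = 0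
    rw [TensorProduct.lift.tmul, TensorProduct.lift.tmul]
    show crossEff p a b - crossEff p b a = 0
    rw [crossEff_comm]; abel)).toAddMonoidHom

lemma jHom_tmk (p : A → P) (hp : IsQuadraticMap p) (a b : A) :
    jHom p hp (tmk a b) = p (a + b) - p a - p b := by
  rfl

end J

section GAsec
variable {A : Type*} [AddCommGroup A]

structure GA (A : Type*) [AddCommGroup A] where
  s : SymSq A
  a : A

noncomputable instance : Add (GA A) :=
  ⟨fun x y => ⟨x.s + y.s + tmk x.a y.a, x.a + y.a⟩⟩
noncomputable instance : Zero (GA A) := ⟨⟨0, 0⟩⟩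
noncomputable instance : Neg (GA A) := ⟨fun x => ⟨-x.s + tmk x.a x.a, -x.a⟩⟩

@[simp] lemma GA.add_s (x y : GA A) : (x + y).s = x.s + y.s + tmk x.a y.a := rfl
@[simp] lemma GA.add_a (x y : GA A) : (x + y).a = x.a + y.a := rfl
@[simp] lemma GA.zero_s : (0 : GA A).s = 0 := rfl
@[simp] lemma GA.zero_a : (0 : GA A).a = 0 := rfl
@[simp] lemma GA.neg_s (x : GA A) : (-x).s = -x.s + tmk x.a x.a := rfl
@[simp] lemma GA.neg_a (x : GA A) : (-x).a = -x.a := rfl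

lemma GA.ext' {x y : GA A} (hs : x.s = y.s) (ha : x.a = y.a) : x = y := by
  cases x; cases y; cases hs; cases ha; rfl

noncomputable instance : AddCommGroup (GA A) where
  add := (· + ·)
  zero := 0
  neg := Neg.neg
  nsmul := nsmulRec
  zsmul := zsmulRec
  add_assoc x y z := by
    refine GA.ext' ?_ ?_
    · simp [tmk_add_left, tmk_add_right]; abel
    · simp [add_assoc]
  zero_add x := by
    refine GA.ext' ?_ ?_ <;> simp [tmk_zero_left]
  add_zero x := by
    refine GA.ext' ?_ ?_ <;> simp [tmk_zero_right]
  neg_add_cancel x := by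
    refine GA.ext' ?_ ?_
    · simp [tmk_neg_left]
    · simp
  add_comm x y := by
    refine GA.ext' ?_ ?_
    · simp [tmk_comm x.a y.a]; abel
    · simp [add_comm]

noncomputable def gaf : A → GA A := fun a => ⟨0, a⟩

lemma gaf_crossEff (a b : A) : crossEff (gaf (A := A)) a b = ⟨-tmk a b, 0⟩ := by
  unfold crossEff gaf
  rw [sub_eq_add_neg, sub_eq_add_neg]
  refine GA.ext' ?_ ?_
  · simp [tmk_add_left, tmk_add_right, tmk_neg_left, tmk_neg_right, tmk_comm a b]
  · simp

lemma gaf_quadratic : IsQuadraticMap (gaf (A := A)) := by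
  constructor
  · intro a₁ a₂ b
    rw [gaf_crossEff, gaf_crossEff, gaf_crossEff]
    refine GA.ext' ?_ ?_ <;> simp [tmk_add_left, tmk_zero_left] <;> abel_nf
  · intro a b₁ b₂
    rw [gaf_crossEff, gaf_crossEff, gaf_crossEff]
    refine GA.ext' ?_ ?_ <;> simp [tmk_add_right, tmk_zero_left] <;> abel_nf

end GAsec

/-- for every abelian group `A` there is a short exact sequence
`0 → Sym²(A) → P(A) → A → 0`, where `j(ab) = p(a+b) - p(a) - p(b)` and `q(p(a)) = a`. -/
theorem symSq_PA_A_exact {A P : Type*} [AddCommGroup A] [AddCommGroup P]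
    (p : A → P) (hp : IsUniversalQuadratic p) :
    ∃ (j : SymSq A →+ P) (q : P →+ A),
      (∀ a b : A, j (Submodule.Quotient.mk (a ⊗ₜ[ℤ] b)) = p (a + b) - p a - p b) ∧
      (∀ a : A, q (p a) = a) ∧
      Function.Injective j ∧
      Function.Surjective q ∧
      AddMonoidHom.range j = AddMonoidHom.ker q := by
  obtain ⟨hquad, huniv⟩ := hp
  have huniv' := univ_transfer p hquad huniv
  set j : SymSq A →+ P := jHom p hquad with hjdef
  have hj : ∀ a b : A, j (tmk a b) = p (a + b) - p a - p b := jHom_tmk p hquad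
  -- p 0 = 0
  have p0 : p 0 = 0 := by
    have h1 := hquad.1 0 0 0
    simp only [crossEff, add_zero, zero_add, sub_self, zero_sub] at h1
    have h2 : (-p 0) + p 0 = (-p 0 + -p 0) + p 0 := by rw [← h1]
    simp only [neg_add_cancel, add_assoc] at h2
    rw [add_zero] at h2
    exact neg_eq_zero.mp h2.symm
  -- construct q
  have hid : IsQuadraticMap (id : A → A) := by
    constructor <;> intro x y z <;> simp only [crossEff, id] <;> abel
  obtain ⟨q, hqfact, -⟩ := huniv' A id hid
  have hq' : ∀ a, q (p a) = a := fun a => (hqfact a).symm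
  have hsurj : Function.Surjective q := fun a => ⟨p a, hq' a⟩
  -- q ∘ j = 0
  have qj0 : ∀ x : SymSq A, q (j x) = 0 := by
    intro x
    induction x using SymSq.inductionOn with
    | zero => simp
    | tmul a b => rw [hj, map_sub, map_sub, hq', hq', hq']; abel
    | add x y hx hy => rw [map_add, map_add, hx, hy, add_zero]
  -- injectivity via GA
  obtain ⟨h, hhfact, -⟩ := huniv' (GA A) gaf gaf_quadratic
  have hjh : ∀ x : SymSq A, h (j x) = ⟨-x, 0⟩ := by
    intro x
    induction x using SymSq.inductionOn with
    | zero =>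
      rw [map_zero, map_zero]
      exact (GA.ext' (by simp) rfl).symm
    | tmul a b =>
      rw [hj, map_sub, map_sub, ← hhfact, ← hhfact, ← hhfact]
      exact gaf_crossEff a b
    | add x y hx hy =>
      rw [map_add, map_add, hx, hy]
      refine GA.ext' ?_ ?_
      · simp [tmk_zero_left]; abel
      · simp
  have hinj : Function.Injective j := by
    rw [injective_iff_map_eq_zero]
    intro x hx
    have h2 := hjh x
    rw [hx, map_zero] at h2
    have hs := congrArg GA.s h2
    simp only [GA.zero_s] at hs
    exact neg_eq_zero.mp hs.symm
  -- every element of P has the form j s + p a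
  have hall : ∀ x : P, ∃ s a, x = j s + p a := by
    let S : AddSubgroup P :=
      { carrier := {x | ∃ s a, x = j s + p a}
        zero_mem' := ⟨0, 0, by simp [p0]⟩
        add_mem' := by
          rintro x y ⟨s, a, rfl⟩ ⟨t, b, rfl⟩
          refine ⟨s + t - tmk a b, a + b, ?_⟩
          rw [map_sub, map_add, hj]
          abel
        neg_mem' := by
          rintro x ⟨s, a, rfl⟩
          refine ⟨-s + tmk a (-a), -a, ?_⟩
          rw [map_add, map_neg, hj]
          rw [add_neg_cancel, p0]
          abel }
    have hle : AddSubgroup.closure (Set.range p) ≤ S :=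
      (AddSubgroup.closure_le _).2 (by rintro y ⟨a, rfl⟩; exact ⟨0, a, by simp⟩)
    rw [closure_range_p p huniv] at hle
    intro x
    exact hle (AddSubgroup.mem_top x)
  refine ⟨j, q, hj, hq', hinj, hsurj, ?_⟩
  ext x
  simp only [AddMonoidHom.mem_range, AddMonoidHom.mem_ker]
  constructor
  · rintro ⟨y, rfl⟩; exact qj0 y
  · intro hx
    obtain ⟨s, a, rfl⟩ := hall x
    have ha : a = 0 := by rwa [map_add, qj0 s, zero_add, hq'] at hx
    subst ha
    exact ⟨s, by rw [p0, add_zero]⟩
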